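/- Let H be a real Hilbert space and X₁, …, Xₙ points in H, u ∈ H with ‖u‖ < 1. If Q̂ minimizes Q ↦ (1/n)∑ᵢ(‖Q − Xᵢ‖ − ‖Xᵢ‖) − ⟨u, Q⟩ over H, then ‖∑ᵢ uᵢ‖ ≤ cardinality of {i : Xᵢ = Q̂} + n‖u‖ where uᵢ = (Q̂ − Xᵢ)/‖Q̂ − Xᵢ‖ for Xᵢ ≠ Q̂ and uᵢ = 0 otherwise; in particular, ‖∑_{i : Xᵢ ≠ Q̂} (Q̂ − Xᵢ)/‖Q̂ − Xᵢ‖ − n·u‖ ≤ #{i : Xᵢ = Q̂}. -/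

import Mathlib

open Finset Classical
noncomputable section
open scoped Classical

lemma aux_norm_add_smul {H : Type*} [NormedAddCommGroup H] [InnerProductSpace ℝ H]
    (a w : H) (ha : a ≠ 0) (t : ℝ) (ht : 0 ≤ t) :
    ‖a + t • w‖ ≤ ‖a‖ + t * (‖a‖⁻¹ * inner ℝ a w) + t^2 * (‖w‖^2 / (2*‖a‖)) := by
  have hna : (0:ℝ) < ‖a‖ := norm_pos_iff.mpr ha
  have hexp : ‖a + t • w‖^2 = ‖a‖^2 + 2*t*(inner ℝ a w : ℝ) + t^2*‖w‖^2 := by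
    rw [@norm_add_sq_real, real_inner_smul_right, norm_smul]
    simp [abs_of_nonneg ht]; ring
  have hcs : |(inner ℝ a w : ℝ)| ≤ ‖a‖ * ‖w‖ := abs_real_inner_le_norm a w
  rw [abs_le] at hcs
  have h1 : -‖w‖ ≤ ‖a‖⁻¹ * (inner ℝ a w : ℝ) := by
    have h := mul_le_mul_of_nonneg_left hcs.1 (inv_nonneg.mpr hna.le)
    calc -‖w‖ = ‖a‖⁻¹ * (-(‖a‖*‖w‖)) := by field_simp
      _ ≤ _ := h
  have h1t : t * (-‖w‖) ≤ t * (‖a‖⁻¹ * (inner ℝ a w : ℝ)) :=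
    mul_le_mul_of_nonneg_left h1 ht
  have hD : t^2 * (‖w‖^2/(2*‖a‖)) * (2*‖a‖) = t^2*‖w‖^2 := by field_simp
  have hR : 0 ≤ ‖a‖ + t * (‖a‖⁻¹ * inner ℝ a w) + t^2 * (‖w‖^2 / (2*‖a‖)) := by
    nlinarith [sq_nonneg (‖a‖ - t*‖w‖), hna, hD, h1t]
  have hsq : ‖a + t • w‖^2 ≤ (‖a‖ + t * (‖a‖⁻¹ * inner ℝ a w) + t^2 * (‖w‖^2 / (2*‖a‖)))^2 := by
    rw [hexp]
    have key : (‖a‖ + t * (‖a‖⁻¹ * (inner ℝ a w:ℝ)) + t^2 * (‖w‖^2 / (2*‖a‖)))^2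
        = ‖a‖^2 + 2*t*(inner ℝ a w:ℝ) + t^2*‖w‖^2
          + (t * (‖a‖⁻¹ * (inner ℝ a w:ℝ)) + t^2 * (‖w‖^2 / (2*‖a‖)))^2 := by
      field_simp
      ring
    rw [key]
    nlinarith [sq_nonneg (t * (‖a‖⁻¹ * (inner ℝ a w:ℝ)) + t^2 * (‖w‖^2 / (2*‖a‖)))]
  nlinarith [norm_nonneg (a + t • w)]

theorem empirical_spatial_quantile_subgradient {H : Type*} [NormedAddCommGroup H]
    [InnerProductSpace ℝ H] [CompleteSpace H]
    (n : ℕ) (X : Fin n → H) (v : H) (hv : ‖v‖ < 1)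
    (Qhat : H)
    (hmin : IsMinOn
      (fun Q : H => (n : ℝ)⁻¹ * ∑ i, (‖Q - X i‖ - ‖X i‖) - @inner ℝ H _ v Q)
      Set.univ Qhat) :
    ‖∑ i, ‖Qhat - X i‖⁻¹ • (Qhat - X i)‖
        ≤ (univ.filter (fun i => X i = Qhat)).card + n * ‖v‖ ∧
      ‖(∑ i, ‖Qhat - X i‖⁻¹ • (Qhat - X i)) - (n : ℝ) • v‖
        ≤ (univ.filter (fun i => X i = Qhat)).card := by
  rcases Nat.eq_zero_or_pos n with hn | hn
  · subst hn; simp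
  have hn' : (0:ℝ) < (n:ℝ) := by exact_mod_cast hn
  set S : H := ∑ i, ‖Qhat - X i‖⁻¹ • (Qhat - X i) with hS
  set m : ℝ := ((univ.filter (fun i => X i = Qhat)).card : ℝ) with hm
  have key : ∀ w : H, (inner ℝ ((n:ℝ) • v - S) w : ℝ) ≤ m * ‖w‖ := by
    intro w
    set C : ℝ := ∑ i ∈ univ.filter (fun i => ¬ X i = Qhat), ‖w‖^2 / (2*‖Qhat - X i‖) with hC
    have hCnn : 0 ≤ C := by
      apply Finset.sum_nonneg
      intro i _; positivity
    have key2 : ∀ t : ℝ, 0 < t →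
        (n:ℝ) * (inner ℝ v w : ℝ) - (inner ℝ S w : ℝ) ≤ m * ‖w‖ + t * C := by
      intro t ht
      have hmin' := hmin (Set.mem_univ (Qhat + t • w))
      simp only [Set.mem_setOf_eq] at hmin'
      have hinner : (inner ℝ v (Qhat + t • w) : ℝ) = inner ℝ v Qhat + t * inner ℝ v w := by
        rw [inner_add_right, real_inner_smul_right]
      have hsum : ∑ i, (‖Qhat + t • w - X i‖ - ‖X i‖)
          = ∑ i, (‖(Qhat - X i) + t • w‖ - ‖X i‖) :=
        Finset.sum_congr rfl (fun i _ => by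
          rw [show Qhat + t • w - X i = (Qhat - X i) + t • w from by abel])
      rw [hinner, hsum] at hmin'
      have hdiff : ∑ i, (‖(Qhat - X i) + t • w‖ - ‖X i‖) - ∑ i, (‖Qhat - X i‖ - ‖X i‖)
          = ∑ i, (‖(Qhat - X i) + t • w‖ - ‖Qhat - X i‖) := by
        rw [← Finset.sum_sub_distrib]
        exact Finset.sum_congr rfl (fun i _ => by ring)
      have h6 : t * (inner ℝ v w : ℝ)
          ≤ (n:ℝ)⁻¹ * ∑ i, (‖(Qhat - X i) + t • w‖ - ‖Qhat - X i‖) := by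
        rw [← hdiff, mul_sub]
        linarith
      have step1 : (n:ℝ) * (t * (inner ℝ v w : ℝ))
          ≤ ∑ i, (‖(Qhat - X i) + t • w‖ - ‖Qhat - X i‖) := by
        have h := mul_le_mul_of_nonneg_left h6 hn'.le
        rwa [mul_inv_cancel_left₀ hn'.ne'] at h
      have step2 : ∑ i, (‖(Qhat - X i) + t • w‖ - ‖Qhat - X i‖)
          ≤ m * (t * ‖w‖) + t * (inner ℝ S w : ℝ) + t^2 * C := by
        rw [← Finset.sum_filter_add_sum_filter_not univ (fun i => X i = Qhat)]
        have hA : ∑ i ∈ univ.filter (fun i => X i = Qhat),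
            (‖(Qhat - X i) + t • w‖ - ‖Qhat - X i‖) = m * (t * ‖w‖) := by
          rw [hm, Finset.sum_congr rfl (fun i hi => ?_), Finset.sum_const, nsmul_eq_mul]
          · simp only [Finset.mem_filter] at hi
            rw [hi.2, sub_self, zero_add, norm_zero, norm_smul, sub_zero,
              Real.norm_eq_abs, abs_of_nonneg ht.le]
        have hSw : (inner ℝ S w : ℝ) = ∑ i ∈ univ.filter (fun i => ¬ X i = Qhat),
            ‖Qhat - X i‖⁻¹ * (inner ℝ (Qhat - X i) w : ℝ) := by
          rw [hS, sum_inner]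
          rw [← Finset.sum_filter_add_sum_filter_not univ (fun i => X i = Qhat)]
          have hz : ∑ i ∈ univ.filter (fun i => X i = Qhat),
              (inner ℝ (‖Qhat - X i‖⁻¹ • (Qhat - X i)) w : ℝ) = 0 := by
            apply Finset.sum_eq_zero
            intro i hi
            simp only [Finset.mem_filter] at hi
            rw [hi.2, sub_self]
            simp
          rw [hz, zero_add]
          exact Finset.sum_congr rfl (fun i _ => real_inner_smul_left _ _ _)
        have hB : ∑ i ∈ univ.filter (fun i => ¬ X i = Qhat),
            (‖(Qhat - X i) + t • w‖ - ‖Qhat - X i‖)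
            ≤ t * (inner ℝ S w : ℝ) + t^2 * C := by
          rw [hSw, hC, Finset.mul_sum, Finset.mul_sum, ← Finset.sum_add_distrib]
          apply Finset.sum_le_sum
          intro i hi
          simp only [Finset.mem_filter] at hi
          have hne : Qhat - X i ≠ 0 := sub_ne_zero.mpr (fun h => hi.2 h.symm)
          have := aux_norm_add_smul (Qhat - X i) w hne t ht.le
          linarith
        linarith [hA, hB]
      have hmul : (n:ℝ) * (t * (inner ℝ v w:ℝ)) ≤ m * (t * ‖w‖) + t * (inner ℝ S w:ℝ) + t^2 * C :=
        le_trans step1 step2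
      have := le_of_mul_le_mul_left (a := t)
        (b := (n:ℝ) * (inner ℝ v w : ℝ) - (inner ℝ S w : ℝ)) (c := m * ‖w‖ + t * C)
        (by nlinarith [hmul]) ht
      exact this
    have hfinal : (n:ℝ) * (inner ℝ v w : ℝ) - (inner ℝ S w : ℝ) ≤ m * ‖w‖ := by
      apply le_of_forall_pos_le_add
      intro ε hε
      have ht : 0 < ε / (C + 1) := by positivity
      have h := key2 (ε / (C + 1)) ht
      have hle : (ε / (C + 1)) * C ≤ ε := by
        rw [div_mul_eq_mul_div, div_le_iff₀ (by linarith)]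
        nlinarith
      linarith
    rw [inner_sub_left, real_inner_smul_left]
    linarith
  have h2 : ‖(n:ℝ) • v - S‖ ≤ m := by
    have hk := key ((n:ℝ) • v - S)
    rw [real_inner_self_eq_norm_sq] at hk
    rcases eq_or_lt_of_le (norm_nonneg ((n:ℝ) • v - S)) with h | h
    · rw [← h]; positivity
    · nlinarith
  have h2' : ‖S - (n:ℝ) • v‖ ≤ m := by
    rw [← norm_neg, neg_sub]; exact h2
  refine ⟨?_, h2'⟩
  calc ‖S‖ = ‖(S - (n:ℝ) • v) + (n:ℝ) • v‖ := by rw [sub_add_cancel]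
    _ ≤ ‖S - (n:ℝ) • v‖ + ‖(n:ℝ) • v‖ := norm_add_le _ _
    _ ≤ m + (n:ℝ) * ‖v‖ := by
        rw [norm_smul, Real.norm_eq_abs, abs_of_nonneg hn'.le]
        linarith
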